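/- arXiv:1409.6277 — 2 statements merged into one kernel-verified Lean document; each statement's English description precedes it below -/
import Mathlib

section
/- The block graph F of any directed graph G (bipartite graph on vertices of G and vertex-resilient blocks, with edges given by membership) is acyclic, i.e., a forest. -/
variable {V : Type*}

/-- Mutual reachability (strong connectivity of a pair) in the digraph `E`. -/
def SConn (E : V → V → Prop) (u v : V) : Prop :=
  Relation.ReflTransGen E u v ∧ Relation.ReflTransGen E v u

/-- The digraph obtained from `E` by deleting vertex `w` (and incident edges). -/
def delV (E : V → V → Prop) (w : V) : V → V → Prop :=
  fun a b => E a b ∧ a ≠ w ∧ b ≠ w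

/-- The digraph obtained from `E` by deleting the single edge `(a,b)`. -/
def delE (E : V → V → Prop) (a b : V) : V → V → Prop :=
  fun x y => E x y ∧ ¬(x = a ∧ y = b)

/-- `u` and `v` are vertex-resilient: they are distinct and remain strongly
connected after deletion of any single other vertex. -/
def VRes (E : V → V → Prop) (u v : V) : Prop :=
  u ≠ v ∧ ∀ w, w ≠ u → w ≠ v → SConn (delV E w) u v

/-- A vertex-resilient block: a maximal set of size ≥ 2 of pairwise
vertex-resilient vertices. -/
def IsVRBlock (E : V → V → Prop) (B : Set V) : Prop :=
  B.Pairwise (VRes E) ∧ (∃ a ∈ B, ∃ b ∈ B, a ≠ b) ∧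
    ∀ B' : Set V, B ⊆ B' → B'.Pairwise (VRes E) → B' = B

/-- `l` is (the vertex list of) a directed path from `u` to `v` in `E`. -/
def IsPathList (E : V → V → Prop) (u v : V) (l : List V) : Prop :=
  l.Chain' E ∧ l.head? = some u ∧ l.getLast? = some v

/-- The internal vertices of a path given as a vertex list. -/
def internalsL (l : List V) : List V := (l.drop 1).dropLast

/-- The edges of a path given as a vertex list. -/
def edgesOfL (l : List V) : List (V × V) := l.zip l.tail

/-- There exist two internally vertex-disjoint (simple, distinct) paths from `u` to `v`. -/
def TwoVPaths (E : V → V → Prop) (u v : V) : Prop :=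
  ∃ l₁ l₂ : List V, IsPathList E u v l₁ ∧ IsPathList E u v l₂ ∧
    l₁.Nodup ∧ l₂.Nodup ∧ l₁ ≠ l₂ ∧ ∀ x ∈ internalsL l₁, x ∉ internalsL l₂

/-- `u` and `v` are 2-vertex-connected. -/
def TwoVConn (E : V → V → Prop) (u v : V) : Prop :=
  u ≠ v ∧ TwoVPaths E u v ∧ TwoVPaths E v u

/-- There exist two edge-disjoint paths from `u` to `v`. -/
def TwoEPaths (E : V → V → Prop) (u v : V) : Prop :=
  ∃ l₁ l₂ : List V, IsPathList E u v l₁ ∧ IsPathList E u v l₂ ∧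
    ∀ e ∈ edgesOfL l₁, e ∉ edgesOfL l₂

/-- `u` and `v` are 2-edge-connected. -/
def TwoEConn (E : V → V → Prop) (u v : V) : Prop :=
  u ≠ v ∧ TwoEPaths E u v ∧ TwoEPaths E v u

/-- A 2-vertex-connected block. -/
def Is2VBlock (E : V → V → Prop) (B : Set V) : Prop :=
  B.Pairwise (TwoVConn E) ∧ (∃ a ∈ B, ∃ b ∈ B, a ≠ b) ∧
    ∀ B' : Set V, B ⊆ B' → B'.Pairwise (TwoVConn E) → B' = B

/-- A 2-edge-connected block. -/
def Is2EBlock (E : V → V → Prop) (B : Set V) : Prop :=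
  B.Pairwise (TwoEConn E) ∧ (∃ a ∈ B, ∃ b ∈ B, a ≠ b) ∧
    ∀ B' : Set V, B ⊆ B' → B'.Pairwise (TwoEConn E) → B' = B

/-- The digraph `E` is strongly connected. -/
def StronglyConn (E : V → V → Prop) : Prop :=
  ∀ u v, Relation.ReflTransGen E u v

/-- `(a,b)` is a strong bridge of the strongly connected digraph `E`. -/
def IsStrongBridge (E : V → V → Prop) (a b : V) : Prop :=
  E a b ∧ ¬ StronglyConn (delE E a b)

/-- `u` dominates `w` in the flow graph with start vertex `s`:
every path from `s` to `w` contains `u`. -/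
def DomOf (E : V → V → Prop) (s u w : V) : Prop :=
  ∀ l : List V, IsPathList E s w l → u ∈ l

/-- `d` is the immediate dominator of `w` in the flow graph with start `s`:
the proper dominator of `w` dominated by all proper dominators of `w`. -/
def IdomOf (E : V → V → Prop) (s d w : V) : Prop :=
  d ≠ w ∧ DomOf E s d w ∧ ∀ u, u ≠ w → DomOf E s u w → DomOf E s u d

/-- The block graph `F` of the digraph `E`: the bipartite undirected graph on the
vertices of `E` together with its vertex-resilient blocks, a vertex `u` being
adjacent to a block node `B` exactly when `u ∈ B`. -/
def blockGraph (E : V → V → Prop) :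
    SimpleGraph (V ⊕ {B : Set V // IsVRBlock E B}) where
  Adj a b := ∃ u B, u ∈ B.1 ∧
    ((a = Sum.inl u ∧ b = Sum.inr B) ∨ (a = Sum.inr B ∧ b = Sum.inl u))
  symm := by
    constructor
    rintro a b ⟨u, B, hm, (⟨rfl, rfl⟩ | ⟨rfl, rfl⟩)⟩
    · exact ⟨u, B, hm, Or.inr ⟨rfl, rfl⟩⟩
    · exact ⟨u, B, hm, Or.inl ⟨rfl, rfl⟩⟩
  loopless := by
    constructor
    rintro a ⟨u, B, hm, (⟨rfl, h⟩ | ⟨rfl, h⟩)⟩ <;> simp at h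


section Aux

variable {E : V → V → Prop}

lemma SConn.refl' (E : V → V → Prop) (u : V) : SConn E u u :=
  ⟨Relation.ReflTransGen.refl, Relation.ReflTransGen.refl⟩

lemma SConn.trans' {u v w : V} (h1 : SConn E u v) (h2 : SConn E v w) : SConn E u w :=
  ⟨h1.1.trans h2.1, h2.2.trans h1.2⟩

lemma VRes.symm' {a b : V} (h : VRes E a b) : VRes E b a :=
  ⟨h.1.symm, fun w hw1 hw2 => ⟨(h.2 w hw2 hw1).2, (h.2 w hw2 hw1).1⟩⟩

lemma chainSConn {v : V} : ∀ {c : List V}, c.Chain' (VRes E) → v ∉ c →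
    ∀ {y z : V}, c.head? = some y → c.getLast? = some z → SConn (delV E v) y z := by
  intro c
  induction c with
  | nil => intro _ _ y z h; simp at h
  | cons a t ih =>
    intro hch hv y z hy hz
    simp only [List.head?_cons, Option.some.injEq] at hy
    subst hy
    cases t with
    | nil =>
      simp only [List.getLast?_singleton, Option.some.injEq] at hz
      subst hz; exact SConn.refl' _ _
    | cons b t' =>
      simp only [List.mem_cons, not_or] at hv
      have hab : VRes E a b := (List.isChain_cons_cons.mp hch).1
      have h1 : SConn (delV E v) a b := hab.2 v hv.1 hv.2.1
      have h2 : SConn (delV E v) b z :=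
        ih (List.isChain_cons_cons.mp hch).2 (by simp; tauto) rfl (by simpa using hz)
      exact h1.trans' h2

lemma blocks_eq {B C : Set V} (hB : IsVRBlock E B) (hC : IsVRBlock E C)
    {v : V} (hvB : v ∈ B) (hvC : v ∈ C) {c : List V} (hch : c.Chain' (VRes E)) (hvc : v ∉ c)
    {y z : V} (hy : c.head? = some y) (hyB : y ∈ B) (hz : c.getLast? = some z) (hzC : z ∈ C) :
    B = C := by
  have hyc : y ∈ c := by cases c with
    | nil => simp at hy
    | cons a t => simp at hy; simp [hy]
  have hzc : z ∈ c := by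
    obtain ⟨hne, rfl⟩ := List.mem_getLast?_eq_getLast (l := c) (Option.mem_def.mpr hz)
    exact List.getLast_mem hne
  have mixed : ∀ {x u : V}, x ∈ B → u ∈ C → x ≠ u → VRes E x u := by
    intro x u hx hu hxu
    refine ⟨hxu, fun w hwx hwu => ?_⟩
    by_cases hwv : w = v
    · subst hwv
      have h1 : SConn (delV E w) x y := by
        rcases eq_or_ne x y with rfl | hne
        · exact SConn.refl' _ _
        · exact (hB.1 hx hyB hne).2 w hwx (fun h => hvc (h ▸ hyc))
      have h2 : SConn (delV E w) y z := chainSConn hch hvc hy hz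
      have h3 : SConn (delV E w) z u := by
        rcases eq_or_ne z u with rfl | hne
        · exact SConn.refl' _ _
        · exact (hC.1 hzC hu hne).2 w (fun h => hvc (h ▸ hzc)) hwu
      exact (h1.trans' h2).trans' h3
    · rcases eq_or_ne x v with rfl | hxv
      · exact (hC.1 hvC hu hxu).2 w hwx hwu
      · rcases eq_or_ne u v with rfl | huv
        · exact (hB.1 hx hvB hxu).2 w hwx hwu
        · exact ((hB.1 hx hvB hxv).2 w hwx hwv).trans'
            ((hC.1 hvC hu (Ne.symm huv)).2 w hwv hwu)
  have hpair : (B ∪ C).Pairwise (VRes E) := by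
    rintro x (hx | hx) u (hu | hu) hxu
    · exact hB.1 hx hu hxu
    · exact mixed hx hu hxu
    · exact (mixed hu hx hxu.symm).symm'
    · exact hC.1 hx hu hxu
  have h1 : B ∪ C = B := hB.2.2 _ Set.subset_union_left hpair
  have h2 : C ⊆ B := h1 ▸ Set.subset_union_right
  exact hC.2.2 B h2 hB.1

lemma bg_adj {a b : V ⊕ {B : Set V // IsVRBlock E B}} (h : (blockGraph E).Adj a b) :
    ∃ u B, u ∈ B.1 ∧ ((a = Sum.inl u ∧ b = Sum.inr B) ∨ (a = Sum.inr B ∧ b = Sum.inl u)) := h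

lemma key {s t : V ⊕ {B : Set V // IsVRBlock E B}} (r : (blockGraph E).Walk s t) :
    (∀ y C, s = Sum.inl y → t = Sum.inr C → ∃ c : List V, c.Chain' (VRes E) ∧
      c.head? = some y ∧ (∃ z, c.getLast? = some z ∧ z ∈ C.1) ∧
      ∀ x ∈ c, Sum.inl x ∈ r.support) ∧
    (∀ D C, s = Sum.inr D → t = Sum.inr C → D = C ∨ ∃ c : List V, c.Chain' (VRes E) ∧
      (∃ y, c.head? = some y ∧ y ∈ D.1) ∧ (∃ z, c.getLast? = some z ∧ z ∈ C.1) ∧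
      ∀ x ∈ c, Sum.inl x ∈ r.support) := by
  induction r with
  | nil =>
    constructor
    · rintro y C rfl h; exact absurd h (by simp)
    · rintro D C rfl h; left; exact Sum.inr_injective h
  | @cons s m t h r ih =>
    constructor
    · rintro y C rfl rfl
      rcases bg_adj h with ⟨u, D, huD, (⟨h1, rfl⟩ | ⟨h1, h2⟩)⟩
      swap
      · exact absurd h1 (by simp)
      have hyu : y = u := Sum.inl_injective h1
      subst hyu
      rcases ih.2 D C rfl rfl with rfl | ⟨c, hch, ⟨y', hy', hy'D⟩, ⟨z, hz, hzC⟩, hsup⟩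
      · exact ⟨[y], List.isChain_singleton y, rfl, ⟨y, rfl, huD⟩, by simp⟩
      · rcases eq_or_ne y y' with rfl | hne
        · exact ⟨c, hch, hy', ⟨z, hz, hzC⟩, fun x hx => by
            simp only [SimpleGraph.Walk.support_cons, List.mem_cons]
            exact Or.inr (hsup x hx)⟩
        · obtain ⟨ct, rfl⟩ : ∃ ct, c = y' :: ct := by
            cases c with
            | nil => simp at hy'
            | cons a t => simp at hy'; exact ⟨t, by simp [hy']⟩
          refine ⟨y :: y' :: ct, List.isChain_cons_cons.mpr ⟨D.2.1 huD hy'D hne, hch⟩, rfl,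
            ⟨z, by simpa using hz, hzC⟩, ?_⟩
          intro x hx
          simp only [SimpleGraph.Walk.support_cons, List.mem_cons]
          rcases List.mem_cons.mp hx with rfl | hx
          · left; rfl
          · exact Or.inr (hsup x hx)
    · rintro D C rfl rfl
      rcases bg_adj h with ⟨u, D', huD, (⟨h1, h2⟩ | ⟨h1, rfl⟩)⟩
      · exact absurd h1 (by simp)
      have hDD : D = D' := Sum.inr_injective h1
      subst hDD
      obtain ⟨c, hch, hy, hlast, hsup⟩ := ih.1 u C rfl rfl
      right
      exact ⟨c, hch, ⟨u, hy, huD⟩, hlast, fun x hx => by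
        simp only [SimpleGraph.Walk.support_cons, List.mem_cons]
        exact Or.inr (hsup x hx)⟩

end Aux

/-- the block graph of any digraph is acyclic, i.e. a forest. -/
theorem stmt3 (E : V → V → Prop) : (blockGraph E).IsAcyclic := by
  intro a p hp
  obtain ⟨B, hB⟩ : ∃ B, Sum.inr B ∈ p.support := by
    cases p with
    | nil => exact absurd rfl hp.ne_nil
    | cons h q =>
      rcases bg_adj h with ⟨u, D, _, ⟨rfl, rfl⟩ | ⟨rfl, rfl⟩⟩
      · exact ⟨D, by simp⟩
      · exact ⟨D, by simp⟩
  classical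
  obtain ⟨q, hq⟩ : ∃ q : (blockGraph E).Walk (Sum.inr B) (Sum.inr B), q.IsCycle :=
    ⟨p.rotate _ hB, hp.rotate hB⟩
  cases q with
  | nil => exact absurd rfl hq.ne_nil
  | cons h1 q1 =>
    rcases bg_adj h1 with ⟨v, B', _, ⟨h1', h2'⟩ | ⟨h1', rfl⟩⟩
    · exact absurd h1' (by simp)
    have hBB' : B = B' := Sum.inr_injective h1'
    subst hBB'
    rename_i hvB
    cases q1 with
    | cons h2 q2 =>
      rcases bg_adj h2 with ⟨u, B0, huB0, ⟨h1'', rfl⟩ | ⟨h1'', h2''⟩⟩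
      swap
      · exact absurd h1'' (by simp)
      have hvu : v = u := Sum.inl_injective h1''
      subst hvu
      -- nodup facts
      have hnd : (Sum.inl v :: q2.support).Nodup := by
        simpa using hq.support_nodup
      have hvnot : Sum.inl v ∉ q2.support := (List.nodup_cons.mp hnd).1
      have hnd2 : q2.support.Nodup := (List.nodup_cons.mp hnd).2
      have hBB0 : B0 ≠ B := by
        rintro rfl
        cases q2 with
        | nil =>
          have h3 := hq.three_le_length
          simp [SimpleGraph.Walk.length_cons] at h3
        | cons h3 q3 =>
          have : Sum.inr B0 ∈ q3.support := q3.end_mem_support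
          have hnot : Sum.inr B0 ∉ q3.support := by
            have := hnd2
            simp only [SimpleGraph.Walk.support_cons, List.nodup_cons] at this
            exact this.1
          exact hnot this
      rcases (key q2).2 B0 B rfl rfl with hEq | ⟨c, hch, ⟨y, hy, hyB0⟩, ⟨z, hz, hzB⟩, hsup⟩
      · exact hBB0 hEq
      · have hvc : v ∉ c := fun hv => hvnot (hsup v hv)
        have : B0.1 = B.1 := blocks_eq B0.2 B.2 huB0 hvB hch hvc hy hyB0 hz hzB
        exact hBB0 (Subtype.ext this)
end

section
/- Let G be a strongly connected digraph with start vertex s and dominator tree D(s). Any two distinct vertex-resilient vertices x and y are siblings in D(s), or one is the immediate dominator (parent in D(s)) of the other. -/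
variable {V : Type*}

open List

lemma mem_of_getLast?' {l : List V} {a : V} (h : l.getLast? = some a) : a ∈ l := by
  obtain ⟨h', rfl⟩ := List.mem_getLast?_eq_getLast (by rw [h]; rfl)
  exact List.getLast_mem _

lemma path_of_rtg {E : V → V → Prop} {u v : V} (h : Relation.ReflTransGen E u v) :
    ∃ l, IsPathList E u v l := by
  induction h with
  | refl => exact ⟨[u], List.isChain_singleton u, rfl, rfl⟩
  | @tail b c _ hbc ih =>
    obtain ⟨l, hc, hh, hl⟩ := ih
    refine ⟨l ++ [c], ?_, ?_, ?_⟩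
    · show List.IsChain E _
      rw [List.isChain_append]
      refine ⟨hc, List.isChain_singleton c, ?_⟩
      intro p hp q hq
      rw [hl] at hp
      simp only [List.head?_cons, Option.mem_some_iff] at hp hq
      subst hp; subst hq; exact hbc
    · rw [List.head?_append, hh]; rfl
    · rw [List.getLast?_append]; rfl

lemma path_append {E : V → V → Prop} {a b c : V} {l₁ l₂ : List V}
    (h₁ : IsPathList E a b l₁) (h₂ : IsPathList E b c l₂) :
    ∃ l, IsPathList E a c l ∧ ∀ z ∈ l, z ∈ l₁ ∨ z ∈ l₂ := by
  obtain ⟨hc₁, hh₁, hl₁⟩ := h₁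
  obtain ⟨hc₂, hh₂, hl₂⟩ := h₂
  match l₂, hh₂ with
  | d :: t, hh₂ =>
  have hd : d = b := by simpa using hh₂
  subst hd
  match t, hc₂, hl₂ with
  | [], _, hl₂ =>
    have hcb : c = d := (by simpa using hl₂ : d = c).symm
    exact ⟨l₁, ⟨hc₁, hh₁, by rw [hl₁, hcb]⟩, fun z hz => Or.inl hz⟩
  | e :: t', hc₂, hl₂ =>
    refine ⟨l₁ ++ (e :: t'), ⟨?_, ?_, ?_⟩, ?_⟩
    · show List.IsChain E _
      rw [List.isChain_append]
      refine ⟨hc₁, (List.isChain_cons_cons.mp hc₂).2, ?_⟩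
      intro p hp q hq
      rw [hl₁] at hp
      simp only [List.head?_cons, Option.mem_some_iff] at hp hq
      subst hp; subst hq
      exact (List.isChain_cons_cons.mp hc₂).1
    · rw [List.head?_append, hh₁]; rfl
    · rw [List.getLast?_append]
      rw [List.getLast?_cons_cons] at hl₂
      rw [hl₂]; rfl
    · intro z hz
      rcases List.mem_append.mp hz with h | h
      · exact Or.inl h
      · exact Or.inr (List.mem_cons_of_mem _ h)

lemma tail_ne_of_chain_delV {E : V → V → Prop} {z : V} :
    ∀ {l : List V}, List.Chain' (delV E z) l → ∀ a ∈ l.tail, a ≠ z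
  | [], _, a, ha => by simp at ha
  | [_], _, a, ha => by simp at ha
  | b :: c :: t, hc, a, ha => by
    rcases List.isChain_cons_cons.mp hc with ⟨he, hc'⟩
    rcases List.mem_cons.mp ha with rfl | ha'
    · exact he.2.2
    · exact tail_ne_of_chain_delV hc' a ha'

lemma path_delV {E : V → V → Prop} {z u v : V} {l : List V}
    (h : IsPathList (delV E z) u v l) (huz : u ≠ z) :
    IsPathList E u v l ∧ z ∉ l := by
  obtain ⟨hc, hh, hl⟩ := h
  refine ⟨⟨hc.imp (fun a b hab => hab.1), hh, hl⟩, ?_⟩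
  intro hz
  match l, hh with
  | d :: t, hh =>
  have hd : d = u := by simpa using hh
  subst hd
  rcases List.mem_cons.mp hz with h | h
  · exact huz h.symm
  · exact tail_ne_of_chain_delV hc z h rfl

lemma dom_self {E : V → V → Prop} {s d : V} : DomOf E s d d :=
  fun _ hl => mem_of_getLast?' hl.2.2

lemma dom_start {E : V → V → Prop} {s w : V} : DomOf E s s w :=
  fun _ hl => List.mem_of_mem_head? (by rw [hl.2.1]; rfl)

lemma dom_of_start_eq {E : V → V → Prop} {s u : V} (h : DomOf E s u s) : u = s := by
  have := h [s] ⟨List.isChain_singleton s, rfl, rfl⟩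
  simpa using this

lemma dom_mem {E : V → V → Prop} {s u w : V} {l : List V} (h : DomOf E s u w)
    (hl : IsPathList E s w l) : u ∈ l := h l hl

-- take up to (and including) position k of l is a path from head to l.get k
lemma path_take {E : V → V → Prop} {s w : V} {l : List V} (hl : IsPathList E s w l)
    {k : ℕ} (hk : k < l.length) : IsPathList E s l[k] (l.take (k+1)) := by
  refine ⟨hl.1.prefix (List.take_prefix _ _), ?_, ?_⟩
  · rw [List.head?_take]
    simp [hl.2.1]
  · rw [List.take_succ, List.getElem?_eq_getElem hk]
    simp only [Option.toList_some]
    exact List.getLast?_concat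

lemma mem_take_indexOf_lt [DecidableEq V] {l : List V} {a : V} {n : ℕ}
    (h : a ∈ l.take n) : l.idxOf a < n := by
  have h1 : l.idxOf a = (l.take n).idxOf a := by
    conv_lhs => rw [← List.take_append_drop n l]
    rw [List.idxOf_append_of_mem h]
  rw [h1]
  exact lt_of_lt_of_le (List.idxOf_lt_length_iff.mpr h) (by simpa using List.length_take_le n l)

-- key ordering lemma via last occurrences
lemma dom_order [DecidableEq V] {E : V → V → Prop} {s w u v : V} {P : List V}
    (hP : IsPathList E s w P) (hu : DomOf E s u w) (hv : v ∈ P)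
    (h : P.reverse.idxOf v < P.reverse.idxOf u) : DomOf E s u v := by
  intro l hl
  by_contra hul
  -- suffix of P starting at last occurrence of v
  set k := P.reverse.idxOf v with hk
  have hkl : k < P.reverse.length := List.idxOf_lt_length_iff.mpr (by simpa using hv)
  set Q := (P.reverse.take (k+1)).reverse with hQ
  have hQsuff : Q <:+ P := by
    rw [hQ]
    conv_rhs => rw [← P.reverse_reverse]
    exact (List.take_prefix _ _).reverse
  have hQhead : Q.head? = some v := by
    rw [hQ, List.head?_reverse, List.take_succ, List.getElem?_eq_getElem hkl]
    simp only [Option.toList_some, List.getLast?_concat]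
    rw [List.getElem_idxOf hkl]
  have hQlast : Q.getLast? = some w := by
    rw [hQ]
    rw [List.getLast?_reverse]
    rw [List.head?_take]
    simp only [Nat.add_eq_zero, and_false, if_false, List.head?_reverse]
    simpa using hP.2.2
  have hQpath : IsPathList E v w Q := ⟨hP.1.suffix hQsuff, hQhead, hQlast⟩
  have huQ : u ∉ Q := by
    intro huq
    have : u ∈ P.reverse.take (k+1) := by
      rw [hQ] at huq; simpa using huq
    have := mem_take_indexOf_lt this
    omega
  obtain ⟨L, hLpath, hLmem⟩ := path_append hl hQpath
  have := hu L hLpath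
  rcases hLmem u this with h | h
  · exact hul h
  · exact huQ h

lemma dom_antisymm [DecidableEq V] {E : V → V → Prop} (s : V) (hsc : StronglyConn E)
    {u v : V} (huv : DomOf E s u v) (hvu : DomOf E s v u) : u = v := by
  by_contra hne
  obtain ⟨P, hP⟩ := path_of_rtg (hsc s v)
  have huP : u ∈ P := huv P hP
  have hku : P.idxOf u < P.length := List.idxOf_lt_length_iff.mpr huP
  have hPu : IsPathList E s u (P.take (P.idxOf u + 1)) := by
    have := path_take hP hku
    rwa [List.getElem_idxOf hku] at this
  have hvtake : v ∈ P.take (P.idxOf u + 1) := hvu _ hPu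
  have h1 : P.idxOf v < P.idxOf u + 1 := mem_take_indexOf_lt hvtake
  have hvP : v ∈ P := List.mem_of_mem_take hvtake
  have hkv : P.idxOf v < P.length := List.idxOf_lt_length_iff.mpr hvP
  have hPv : IsPathList E s v (P.take (P.idxOf v + 1)) := by
    have := path_take hP hkv
    rwa [List.getElem_idxOf hkv] at this
  have hutake : u ∈ P.take (P.idxOf v + 1) := huv _ hPv
  have h2 : P.idxOf u < P.idxOf v + 1 := mem_take_indexOf_lt hutake
  exact hne ((List.idxOf_inj huP).mp (by omega))

lemma idom_exists [DecidableEq V] {E : V → V → Prop} {s w : V} (hsc : StronglyConn E)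
    (hw : w ≠ s) : ∃ d, IdomOf E s d w := by
  obtain ⟨P, hP⟩ := path_of_rtg (hsc s w)
  set S : Set ℕ := {n | ∃ u, u ≠ w ∧ DomOf E s u w ∧ P.reverse.idxOf u = n} with hS
  have hSne : S.Nonempty := ⟨_, s, Ne.symm hw, dom_start, rfl⟩
  obtain ⟨d, hdw, hdom, hdidx⟩ := Nat.sInf_mem hSne
  refine ⟨d, hdw, hdom, ?_⟩
  intro u huw hu
  rcases eq_or_ne u d with rfl | hud
  · exact dom_self
  · have huS : P.reverse.idxOf u ∈ S := ⟨u, huw, hu, rfl⟩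
    have h1 : sInf S ≤ P.reverse.idxOf u := Nat.sInf_le huS
    have huP : u ∈ P := hu P hP
    have hdP : d ∈ P := hdom P hP
    have hne : P.reverse.idxOf u ≠ P.reverse.idxOf d := by
      intro h
      exact hud ((List.idxOf_inj (by simpa using huP)).mp h)
    have : P.reverse.idxOf d < P.reverse.idxOf u := by omega
    exact dom_order hP hu hdP this

lemma vres_symm {E : V → V → Prop} {x y : V} (h : VRes E x y) : VRes E y x :=
  ⟨h.1.symm, fun w hwy hwx => ⟨(h.2 w hwx hwy).2, (h.2 w hwx hwy).1⟩⟩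

lemma dom_transfer {E : V → V → Prop} {s x y z : V} (hvr : VRes E x y)
    (hzx : z ≠ x) (hzy : z ≠ y) (h : DomOf E s z x) : DomOf E s z y := by
  intro l hl
  by_contra hzl
  obtain ⟨_, hyx⟩ := hvr.2 z hzx hzy
  obtain ⟨m, hm⟩ := path_of_rtg hyx
  obtain ⟨hmE, hzm⟩ := path_delV hm hzy.symm
  obtain ⟨L, hLpath, hLmem⟩ := path_append hl hmE
  rcases hLmem z (h L hLpath) with hc | hc
  · exact hzl hc
  · exact hzm hc

/-- in a strongly connected digraph with start vertex `s`, any two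
distinct vertex-resilient vertices `x,y` are siblings in the dominator tree `D(s)`
(they have a common immediate dominator), or one is the immediate dominator of the other. -/
theorem stmt9 (E : V → V → Prop) (s : V) (hsc : StronglyConn E)
    (x y : V) (hxy : x ≠ y) (hvr : VRes E x y) :
    (∃ p, IdomOf E s p x ∧ IdomOf E s p y) ∨ IdomOf E s x y ∨ IdomOf E s y x := by
  classical
  rcases eq_or_ne s x with rfl | hsx
  · -- s = x : show IdomOf E s x y
    right; left
    refine ⟨hxy, dom_start, ?_⟩
    intro u huy hu
    rcases eq_or_ne u s with rfl | hus
    · exact dom_self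
    · exfalso
      exact hus (dom_of_start_eq (dom_transfer (vres_symm hvr) huy hus hu))
  rcases eq_or_ne s y with rfl | hsy
  · right; right
    refine ⟨hxy.symm, dom_start, ?_⟩
    intro u hux hu
    rcases eq_or_ne u s with rfl | hus
    · exact dom_self
    · exact absurd (dom_of_start_eq (dom_transfer hvr hux hus hu)) hus
  obtain ⟨dx, hdx⟩ := idom_exists (E := E) hsc (Ne.symm hsx)
  obtain ⟨dy, hdy⟩ := idom_exists (E := E) hsc (Ne.symm hsy)
  rcases eq_or_ne dy x with rfl | hdyx
  · exact Or.inr (Or.inl hdy)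
  rcases eq_or_ne dx y with rfl | hdxy
  · exact Or.inr (Or.inr hdx)
  · -- dx, dy ∉ {x, y}
    have hdxdomy : DomOf E s dx y := dom_transfer hvr hdx.1 hdxy hdx.2.1
    have hdydomx : DomOf E s dy x := dom_transfer (vres_symm hvr) hdy.1 hdyx hdy.2.1
    have h1 : DomOf E s dx dy := hdy.2.2 dx hdxy hdxdomy
    have h2 : DomOf E s dy dx := hdx.2.2 dy hdyx hdydomx
    have : dx = dy := dom_antisymm s hsc h1 h2
    exact Or.inl ⟨dx, hdx, this ▸ hdy⟩
end
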